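/- Let d be a positive integer and let a, b be integers with 1 ≤ a ≤ b and a + b ≤ d. Then the cardinality N_d(a,b) := |O^{(d)}_{a,b}| equals C(d,a)·C(d−a,b)·2^{a+b−2} if a < b, and equals (1/2)·C(d,a)·C(d−a,b)·2^{a+b−2} if a = b, where C(n,k) denotes the binomial coefficient. -/

import Mathlib

open scoped BigOperators

noncomputable def uvec {d : ℕ} (A : Finset (Fin d)) (ε : Fin d → ℝ) :
    EuclideanSpace ℝ (Fin d) :=
  (Real.sqrt A.card)⁻¹ • ∑ i ∈ A, ε i • (EuclideanSpace.single i (1 : ℝ))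

def IsSign {d : ℕ} (A : Finset (Fin d)) (ε : Fin d → ℝ) : Prop :=
  ∀ i, if i ∈ A then (ε i = 1 ∨ ε i = -1) else ε i = 1

def IsIndex (d a b : ℕ) (A B : Finset (Fin d)) (ε δ : Fin d → ℝ) : Prop :=
  Disjoint A B ∧ A.card = a ∧ B.card = b ∧ IsSign A ε ∧ IsSign B δ

noncomputable def Wspan {d : ℕ} (A B : Finset (Fin d)) (ε δ : Fin d → ℝ) :
    Submodule ℝ (EuclideanSpace ℝ (Fin d)) :=
  Submodule.span ℝ {uvec A ε, uvec B δ}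

def orbitSet (d a b : ℕ) : Set (Submodule ℝ (EuclideanSpace ℝ (Fin d))) :=
  {W | ∃ A B ε δ, IsIndex d a b A B ε δ ∧ W = Wspan A B ε δ}

lemma uvec_apply {d : ℕ} (A : Finset (Fin d)) (ε : Fin d → ℝ) (j : Fin d) :
    uvec A ε j = if j ∈ A then (Real.sqrt A.card)⁻¹ * ε j else 0 := by
  classical
  simp only [uvec, PiLp.smul_apply, smul_eq_mul]
  rw [show (∑ i ∈ A, ε i • (EuclideanSpace.single i (1:ℝ))) j
      = ∑ i ∈ A, (ε i • (EuclideanSpace.single i (1:ℝ))) j from by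
    rw [WithLp.ofLp_sum]; exact Finset.sum_apply j A _]
  simp only [PiLp.smul_apply, EuclideanSpace.single_apply, smul_eq_mul, mul_ite, mul_one, mul_zero]
  rw [Finset.sum_ite_eq A j ε]
  by_cases h : j ∈ A <;> simp [h]

lemma isSign_mem {d : ℕ} {A : Finset (Fin d)} {ε : Fin d → ℝ} (h : IsSign A ε) {i : Fin d}
    (hi : i ∈ A) : ε i = 1 ∨ ε i = -1 := by have := h i; simpa [hi] using this

lemma isSign_ne_zero {d : ℕ} {A : Finset (Fin d)} {ε : Fin d → ℝ} (h : IsSign A ε) {i : Fin d}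
    (hi : i ∈ A) : ε i ≠ 0 := by rcases isSign_mem h hi with h1 | h1 <;> simp [h1]

lemma sqrt_inv_pos {d : ℕ} {A : Finset (Fin d)} (hA : A.Nonempty) :
    0 < (Real.sqrt A.card)⁻¹ := by
  have : (0:ℝ) < A.card := by exact_mod_cast Finset.card_pos.2 hA
  positivity

lemma uvec_ne_zero_iff {d : ℕ} {A : Finset (Fin d)} {ε : Fin d → ℝ} (hA : A.Nonempty)
    (hε : IsSign A ε) (j : Fin d) : uvec A ε j ≠ 0 ↔ j ∈ A := by
  rw [uvec_apply]
  by_cases h : j ∈ A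
  · simp only [h, if_true, iff_true]
    exact mul_ne_zero (ne_of_gt (sqrt_inv_pos hA)) (isSign_ne_zero hε h)
  · simp [h]

lemma key1 {d : ℕ} {A A' : Finset (Fin d)} {ε ε' : Fin d → ℝ} {α : ℝ}
    (hA : A.Nonempty) (hε : IsSign A ε) (hA' : A'.Nonempty) (hε' : IsSign A' ε')
    (h : ∀ j, α * uvec A ε j = uvec A' ε' j) :
    A' = A ∧ ((∀ i ∈ A, ε' i = ε i) ∨ (∀ i ∈ A, ε' i = -ε i)) := by
  have hα : α ≠ 0 := by
    obtain ⟨i, hi⟩ := id hA'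
    intro h0
    exact (uvec_ne_zero_iff hA' hε' i).2 hi (by rw [← h i, h0, zero_mul])
  have hAA : A' = A := by
    ext j
    rw [← uvec_ne_zero_iff hA' hε' j, ← h j, ← uvec_ne_zero_iff hA hε j]
    constructor
    · intro hj; exact fun h0 => hj (by rw [h0, mul_zero])
    · intro hj; exact mul_ne_zero hα hj
  subst hAA
  refine ⟨rfl, ?_⟩
  have hsrel : ∀ i ∈ A', ε' i = α * ε i := by
    intro i hi
    have h1 := h i
    rw [uvec_apply, uvec_apply, if_pos hi, if_pos hi] at h1
    have hsA : (Real.sqrt A'.card)⁻¹ ≠ 0 := ne_of_gt (sqrt_inv_pos hA)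
    have : (Real.sqrt A'.card)⁻¹ * (α * ε i) = (Real.sqrt A'.card)⁻¹ * ε' i := by
      rw [← h1]; ring
    exact (mul_left_cancel₀ hsA this).symm
  obtain ⟨i₀, hi₀⟩ := hA
  have hα1 : α = 1 ∨ α = -1 := by
    have := hsrel i₀ hi₀
    rcases isSign_mem hε hi₀ with h1 | h1 <;> rcases isSign_mem hε' hi₀ with h2 | h2 <;>
      rw [h1, h2] at this <;> [left; right; right; left] <;> linarith
  rcases hα1 with rfl | rfl
  · left; intro i hi; rw [hsrel i hi, one_mul]
  · right; intro i hi; rw [hsrel i hi]; ring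

lemma key {d : ℕ} {A B A' : Finset (Fin d)} {ε δ ε' : Fin d → ℝ}
    (hA : A.Nonempty) (hB : B.Nonempty) (hAB : Disjoint A B)
    (hε : IsSign A ε) (hδ : IsSign B δ)
    (hA' : A'.Nonempty) (hε' : IsSign A' ε')
    (hm : uvec A' ε' ∈ Wspan A B ε δ) :
    (A' = A ∧ ((∀ i ∈ A, ε' i = ε i) ∨ (∀ i ∈ A, ε' i = -ε i)))
    ∨ (A' = B ∧ ((∀ i ∈ B, ε' i = δ i) ∨ (∀ i ∈ B, ε' i = -δ i)))
    ∨ A' = A ∪ B := by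
  classical
  obtain ⟨α, β, hx⟩ := Submodule.mem_span_pair.1 hm
  have hcoord : ∀ j, α * uvec A ε j + β * uvec B δ j = uvec A' ε' j := by
    intro j; rw [← hx]; simp
  by_cases hβ : β = 0
  · left
    exact key1 hA hε hA' hε' (fun j => by have := hcoord j; rw [hβ] at this; linarith)
  by_cases hα : α = 0
  · right; left
    exact key1 hB hδ hA' hε' (fun j => by have := hcoord j; rw [hα] at this; linarith)
  · right; right
    ext j
    constructor
    · intro hj
      by_contra hjAB
      rw [Finset.mem_union] at hjAB
      push_neg at hjAB
      have h1 : uvec A ε j = 0 := by rw [uvec_apply, if_neg hjAB.1]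
      have h2 : uvec B δ j = 0 := by rw [uvec_apply, if_neg hjAB.2]
      exact (uvec_ne_zero_iff hA' hε' j).2 hj (by rw [← hcoord j, h1, h2]; ring)
    · intro hj
      rw [← uvec_ne_zero_iff hA' hε' j, ← hcoord j]
      rcases Finset.mem_union.1 hj with hjA | hjB
      · have h2 : uvec B δ j = 0 := by
          rw [uvec_apply, if_neg (Finset.disjoint_left.1 hAB hjA)]
        rw [h2, mul_zero, add_zero]
        exact mul_ne_zero hα ((uvec_ne_zero_iff hA hε j).2 hjA)
      · have h1 : uvec A ε j = 0 := by
          rw [uvec_apply, if_neg (Finset.disjoint_right.1 hAB hjB)]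
        rw [h1, mul_zero, zero_add]
        exact mul_ne_zero hβ ((uvec_ne_zero_iff hB hδ j).2 hjB)

lemma span_eq_cases {d a b : ℕ} (ha : 1 ≤ a) (hb : 1 ≤ b)
    {A B A' B' : Finset (Fin d)} {ε δ ε' δ' : Fin d → ℝ}
    (h1 : IsIndex d a b A B ε δ) (h2 : IsIndex d a b A' B' ε' δ')
    (hW : Wspan A B ε δ = Wspan A' B' ε' δ') :
    (A' = A ∧ B' = B ∧ ((∀ i ∈ A, ε' i = ε i) ∨ (∀ i ∈ A, ε' i = -ε i))
       ∧ ((∀ i ∈ B, δ' i = δ i) ∨ (∀ i ∈ B, δ' i = -δ i)))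
    ∨ (A' = B ∧ B' = A) := by
  obtain ⟨hAB, hAa, hBb, hε, hδ⟩ := h1
  obtain ⟨hAB', hAa', hBb', hε', hδ'⟩ := h2
  have hA : A.Nonempty := Finset.card_pos.1 (by omega)
  have hB : B.Nonempty := Finset.card_pos.1 (by omega)
  have hA' : A'.Nonempty := Finset.card_pos.1 (by omega)
  have hB' : B'.Nonempty := Finset.card_pos.1 (by omega)
  have hcu : (A ∪ B).card = a + b := by
    rw [Finset.card_union_of_disjoint hAB, hAa, hBb]
  have hu' : uvec A' ε' ∈ Wspan A B ε δ := by
    rw [hW]; exact Submodule.subset_span (Set.mem_insert _ _)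
  have hv' : uvec B' δ' ∈ Wspan A B ε δ := by
    rw [hW]; exact Submodule.subset_span (Set.mem_insert_of_mem _ rfl)
  rcases key hA hB hAB hε hδ hA' hε' hu' with ⟨hAA, hsA⟩ | ⟨hAB2, hsA⟩ | hAU
  · rcases key hA hB hAB hε hδ hB' hδ' hv' with ⟨hBA, _⟩ | ⟨hBB, hsB⟩ | hBU
    · exfalso
      obtain ⟨i, hi⟩ := hA
      exact Finset.disjoint_left.1 hAB' (hAA ▸ hi) (hBA ▸ hi)
    · exact Or.inl ⟨hAA, hBB, hsA, hsB⟩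
    · exfalso; rw [hBU, hcu] at hBb'; omega
  · rcases key hA hB hAB hε hδ hB' hδ' hv' with ⟨hBA, hsB⟩ | ⟨hBB, _⟩ | hBU
    · exact Or.inr ⟨hAB2, hBA⟩
    · exfalso
      obtain ⟨i, hi⟩ := hB
      exact Finset.disjoint_left.1 hAB' (hAB2 ▸ hi) (hBB ▸ hi)
    · exfalso; rw [hBU, hcu] at hBb'; omega
  · exfalso; rw [hAU, hcu] at hAa'; omega

def sgnf {d : ℕ} (S : Finset (Fin d)) : Fin d → ℝ := fun i => if i ∈ S then -1 else 1

lemma sgnf_isSign {d : ℕ} {S A : Finset (Fin d)} (h : S ⊆ A) : IsSign A (sgnf S) := by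
  intro i
  by_cases hi : i ∈ A
  · by_cases hs : i ∈ S <;> simp [hi, hs, sgnf]
  · have : i ∉ S := fun hs => hi (h hs)
    simp [sgnf, hi, this]

abbrev F4 (d : ℕ) := Finset (Fin d) × Finset (Fin d) × Finset (Fin d) × Finset (Fin d)

def Canon (d a b : ℕ) (p : F4 d) : Prop :=
  p.1.card = a ∧ p.2.1.card = b ∧ Disjoint p.1 p.2.1 ∧
  p.2.2.1 ⊆ p.1 ∧ p.2.2.2 ⊆ p.2.1 ∧
  (∀ x ∈ p.2.2.1, p.1.min < (x : WithTop (Fin d))) ∧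
  (∀ x ∈ p.2.2.2, p.2.1.min < (x : WithTop (Fin d))) ∧
  (a = b → p.1.min < p.2.1.min)

noncomputable def Phi (d : ℕ) (p : F4 d) : Submodule ℝ (EuclideanSpace ℝ (Fin d)) :=
  Wspan p.1 p.2.1 (sgnf p.2.2.1) (sgnf p.2.2.2)

lemma span_pair_smul {M : Type*} [AddCommGroup M] [Module ℝ M] {u v : M} {c e : ℝ}
    (hc : c ≠ 0) (he : e ≠ 0) :
    Submodule.span ℝ ({c • u, e • v} : Set M) = Submodule.span ℝ ({u, v} : Set M) := by
  apply le_antisymm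
  · rw [Submodule.span_le]
    intro x hx
    rcases hx with rfl | hx
    · exact Submodule.smul_mem _ _ (Submodule.subset_span (Set.mem_insert _ _))
    · rcases hx with rfl
      exact Submodule.smul_mem _ _ (Submodule.subset_span (Set.mem_insert_of_mem _ rfl))
  · rw [Submodule.span_le]
    intro x hx
    rcases hx with rfl | hx
    · have h1 : c • x ∈ Submodule.span ℝ ({c • x, e • v} : Set M) :=
        Submodule.subset_span (Set.mem_insert _ _)
      have h2 := Submodule.smul_mem _ c⁻¹ h1
      rwa [smul_smul, inv_mul_cancel₀ hc, one_smul] at h2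
    · rcases hx with rfl
      have h1 : e • x ∈ Submodule.span ℝ ({c • u, e • x} : Set M) :=
        Submodule.subset_span (Set.mem_insert_of_mem _ rfl)
      have h2 := Submodule.smul_mem _ e⁻¹ h1
      rwa [smul_smul, inv_mul_cancel₀ he, one_smul] at h2

lemma uvec_normalize {d : ℕ} {A : Finset (Fin d)} {ε : Fin d → ℝ}
    (hε : IsSign A ε) {m : Fin d} (hm : m ∈ A) :
    uvec A (sgnf (A.filter (fun i => ε i ≠ ε m))) = ε m • uvec A ε := by
  classical
  ext j
  rw [PiLp.smul_apply, uvec_apply, uvec_apply, smul_eq_mul]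
  by_cases hj : j ∈ A
  · rw [if_pos hj, if_pos hj]
    have hval : sgnf (A.filter (fun i => ε i ≠ ε m)) j = ε m * ε j := by
      unfold sgnf
      by_cases hS : ε j ≠ ε m
      · rw [if_pos (Finset.mem_filter.2 ⟨hj, hS⟩)]
        rcases isSign_mem hε hj with h1 | h1 <;> rcases isSign_mem hε hm with h2 | h2 <;>
          simp [h1, h2] at hS ⊢
      · push_neg at hS
        rw [if_neg (by simp [Finset.mem_filter, hS])]
        rw [hS]
        rcases isSign_mem hε hm with h2 | h2 <;> rw [h2] <;> ring
    rw [hval]; ring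
  · rw [if_neg hj, if_neg hj, mul_zero]

lemma wspan_comm {d : ℕ} (A B : Finset (Fin d)) (ε δ : Fin d → ℝ) :
    Wspan B A δ ε = Wspan A B ε δ := by
  unfold Wspan
  rw [Set.pair_comm]

lemma min_ne_of_disjoint {d : ℕ} {A B : Finset (Fin d)} (hA : A.Nonempty) (hB : B.Nonempty)
    (hAB : Disjoint A B) : A.min ≠ B.min := by
  rw [← Finset.coe_min' hA, ← Finset.coe_min' hB]
  intro h
  have h2 : A.min' hA = B.min' hB := by exact_mod_cast h
  exact Finset.disjoint_left.1 hAB (Finset.min'_mem A hA)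
    (h2 ▸ Finset.min'_mem B hB)

lemma to_canon {d a b : ℕ} {A B : Finset (Fin d)} {ε δ : Fin d → ℝ}
    (hA : A.Nonempty) (hB : B.Nonempty) (hAB : Disjoint A B) (hAa : A.card = a)
    (hBb : B.card = b) (hε : IsSign A ε) (hδ : IsSign B δ)
    (hmin : a = b → A.min < B.min) :
    ∃ p : F4 d, Canon d a b p ∧ Phi d p = Wspan A B ε δ := by
  classical
  have hmA := Finset.min'_mem A hA
  have hmB := Finset.min'_mem B hB
  refine ⟨(A, B, A.filter (fun i => ε i ≠ ε (A.min' hA)),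
      B.filter (fun i => δ i ≠ δ (B.min' hB))), ?_, ?_⟩
  · refine ⟨hAa, hBb, hAB, Finset.filter_subset _ _, Finset.filter_subset _ _, ?_, ?_, hmin⟩
    · intro x hx
      rw [Finset.mem_filter] at hx
      rw [← Finset.coe_min' hA, WithTop.coe_lt_coe]
      refine lt_of_le_of_ne (Finset.min'_le _ _ hx.1) ?_
      intro h; exact hx.2 (by rw [h])
    · intro x hx
      rw [Finset.mem_filter] at hx
      rw [← Finset.coe_min' hB, WithTop.coe_lt_coe]
      refine lt_of_le_of_ne (Finset.min'_le _ _ hx.1) ?_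
      intro h; exact hx.2 (by rw [h])
  · show Wspan A B _ _ = Wspan A B ε δ
    unfold Wspan
    rw [uvec_normalize hε hmA, uvec_normalize hδ hmB]
    exact span_pair_smul (isSign_ne_zero hε hmA) (isSign_ne_zero hδ hmB)

lemma orbit_eq {d a b : ℕ} (ha : 1 ≤ a) (hb : 1 ≤ b) :
    orbitSet d a b = Phi d '' {p : F4 d | Canon d a b p} := by
  ext W
  constructor
  · rintro ⟨A, B, ε, δ, ⟨hAB, hAa, hBb, hε, hδ⟩, rfl⟩
    have hA : A.Nonempty := Finset.card_pos.1 (by omega)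
    have hB : B.Nonempty := Finset.card_pos.1 (by omega)
    by_cases hcase : a = b → A.min < B.min
    · obtain ⟨p, hp, hPhi⟩ := to_canon hA hB hAB hAa hBb hε hδ hcase
      exact ⟨p, hp, hPhi⟩
    · push_neg at hcase
      obtain ⟨hab, hnlt⟩ := hcase
      have hne := min_ne_of_disjoint hA hB hAB
      have hlt : B.min < A.min := lt_of_le_of_ne hnlt (Ne.symm hne)
      obtain ⟨p, hp, hPhi⟩ := to_canon (a := a) (b := b) hB hA hAB.symm
        (by omega) (by omega) hδ hε (fun _ => hlt)
      exact ⟨p, hp, by rw [hPhi, wspan_comm]⟩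
  · rintro ⟨p, hp, rfl⟩
    exact ⟨p.1, p.2.1, sgnf p.2.2.1, sgnf p.2.2.2,
      ⟨hp.2.2.1, hp.1, hp.2.1, sgnf_isSign hp.2.2.2.1, sgnf_isSign hp.2.2.2.2.1⟩, rfl⟩

lemma min_notmem_cond {d : ℕ} {A S : Finset (Fin d)} (hA : A.Nonempty)
    (h : ∀ x ∈ S, A.min < (x : WithTop (Fin d))) : A.min' hA ∉ S := by
  intro hmem
  have := h _ hmem
  rw [← Finset.coe_min' hA, WithTop.coe_lt_coe] at this
  exact lt_irrefl _ this

lemma phi_injOn {d a b : ℕ} (ha : 1 ≤ a) (hb : 1 ≤ b) :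
    Set.InjOn (Phi d) {p : F4 d | Canon d a b p} := by
  rintro ⟨A, B, S, T⟩ hp ⟨A', B', S', T'⟩ hp' hW
  obtain ⟨hAa, hBb, hAB, hSA, hTB, hSmin, hTmin, habmin⟩ := hp
  obtain ⟨hAa', hBb', hAB', hSA', hTB', hSmin', hTmin', habmin'⟩ := hp'
  dsimp only at hAa hBb hAB hSA hTB hSmin hTmin habmin hAa' hBb' hAB' hSA' hTB' hSmin' hTmin' habmin'
  have hA : A.Nonempty := Finset.card_pos.1 (by omega)
  have hB : B.Nonempty := Finset.card_pos.1 (by omega)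
  have hA' : A'.Nonempty := Finset.card_pos.1 (by omega)
  have hB' : B'.Nonempty := Finset.card_pos.1 (by omega)
  have h1 : IsIndex d a b A B (sgnf S) (sgnf T) :=
    ⟨hAB, hAa, hBb, sgnf_isSign hSA, sgnf_isSign hTB⟩
  have h2 : IsIndex d a b A' B' (sgnf S') (sgnf T') :=
    ⟨hAB', hAa', hBb', sgnf_isSign hSA', sgnf_isSign hTB'⟩
  have hW2 : Wspan A B (sgnf S) (sgnf T) = Wspan A' B' (sgnf S') (sgnf T') := hW
  rcases span_eq_cases ha hb h1 h2 hW2 with ⟨hAA, hBB, hsA, hsB⟩ | ⟨hab1, hab2⟩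
  · subst hAA; subst hBB
    have hSS : S = S' := by
      rcases hsA with hs | hs
      · ext i
        constructor
        · intro hi
          have := hs i (hSA hi)
          by_contra hi'
          norm_num [sgnf, hi, hi'] at this
        · intro hi
          have := hs i (hSA' hi)
          by_contra hi'
          norm_num [sgnf, hi, hi'] at this
      · exfalso
        have hm := Finset.min'_mem A' hA'
        have := hs _ hm
        simp only [sgnf] at this
        rw [if_neg (min_notmem_cond hA' hSmin'), if_neg (min_notmem_cond hA' hSmin)] at this
        norm_num at this
    have hTT : T = T' := by
      rcases hsB with hs | hs
      · ext i
        constructor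
        · intro hi
          have := hs i (hTB hi)
          by_contra hi'
          norm_num [sgnf, hi, hi'] at this
        · intro hi
          have := hs i (hTB' hi)
          by_contra hi'
          norm_num [sgnf, hi, hi'] at this
      · exfalso
        have hm := Finset.min'_mem B' hB'
        have := hs _ hm
        simp only [sgnf] at this
        rw [if_neg (min_notmem_cond hB' hTmin'), if_neg (min_notmem_cond hB' hTmin)] at this
        norm_num at this
    rw [hSS, hTT]
  · exfalso
    have hab : a = b := by rw [hab1] at hAa'; omega
    have l1 := habmin hab
    have l2 := habmin' hab
    rw [hab1, hab2] at l2
    exact lt_asymm l1 l2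

open Classical in
noncomputable def canonF (d a b : ℕ) : Finset (F4 d) := Finset.univ.filter (Canon d a b)

open Classical in
noncomputable def pairsF (d a b : ℕ) : Finset (Finset (Fin d) × Finset (Fin d)) :=
  Finset.univ.filter (fun q => q.1.card = a ∧ q.2.card = b ∧ Disjoint q.1 q.2 ∧
    (a = b → q.1.min < q.2.min))

open Classical in
noncomputable def pairsAll (d a b : ℕ) : Finset (Finset (Fin d) × Finset (Fin d)) :=
  Finset.univ.filter (fun q => q.1.card = a ∧ q.2.card = b ∧ Disjoint q.1 q.2)

noncomputable def coreF {d : ℕ} (A : Finset (Fin d)) : Finset (Fin d) :=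
  A.filter (fun x => A.min < (x : WithTop (Fin d)))

lemma coreF_card {d : ℕ} {A : Finset (Fin d)} (hA : A.Nonempty) :
    (coreF A).card = A.card - 1 := by
  have h : coreF A = A.erase (A.min' hA) := by
    ext x
    simp only [coreF, Finset.mem_filter, Finset.mem_erase]
    constructor
    · rintro ⟨hx, hlt⟩
      refine ⟨fun h => ?_, hx⟩
      rw [← Finset.coe_min' hA, WithTop.coe_lt_coe] at hlt
      exact absurd (h ▸ hlt) (lt_irrefl _)
    · rintro ⟨hne, hx⟩
      refine ⟨hx, ?_⟩
      rw [← Finset.coe_min' hA, WithTop.coe_lt_coe]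
      exact lt_of_le_of_ne (Finset.min'_le _ _ hx) (Ne.symm hne)
  rw [h, Finset.card_erase_of_mem (Finset.min'_mem A hA)]

lemma subset_coreF_iff {d : ℕ} {A S : Finset (Fin d)} :
    S ⊆ coreF A ↔ S ⊆ A ∧ ∀ x ∈ S, A.min < (x : WithTop (Fin d)) := by
  constructor
  · intro h
    exact ⟨fun x hx => (Finset.mem_filter.1 (h hx)).1,
      fun x hx => (Finset.mem_filter.1 (h hx)).2⟩
  · rintro ⟨h1, h2⟩ x hx
    exact Finset.mem_filter.2 ⟨h1 hx, h2 x hx⟩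

lemma canonF_eq (d a b : ℕ) :
    canonF d a b = (pairsF d a b).biUnion
      (fun q => {q.1} ×ˢ {q.2} ×ˢ (coreF q.1).powerset ×ˢ (coreF q.2).powerset) := by
  classical
  ext ⟨A, B, S, T⟩
  simp only [canonF, Canon, pairsF, Finset.mem_filter, Finset.mem_univ, true_and,
    Finset.mem_biUnion, Finset.mem_product, Finset.mem_singleton, Finset.mem_powerset]
  constructor
  · rintro ⟨h1, h2, h3, h4, h5, h6, h7, h8⟩
    exact ⟨(A, B), ⟨h1, h2, h3, h8⟩, rfl, rfl, subset_coreF_iff.2 ⟨h4, h6⟩,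
      subset_coreF_iff.2 ⟨h5, h7⟩⟩
  · rintro ⟨⟨A0, B0⟩, ⟨h1, h2, h3, h8⟩, e1, e2, hS, hT⟩
    dsimp only at e1 e2 hS hT h1 h2 h3 h8
    subst e1; subst e2
    obtain ⟨h4, h6⟩ := subset_coreF_iff.1 hS
    obtain ⟨h5, h7⟩ := subset_coreF_iff.1 hT
    exact ⟨h1, h2, h3, h4, h5, h6, h7, h8⟩

lemma canonF_card (d a b : ℕ) (ha : 1 ≤ a) (hb : 1 ≤ b) :
    (canonF d a b).card = (pairsF d a b).card * (2 ^ (a - 1) * 2 ^ (b - 1)) := by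
  classical
  rw [canonF_eq d a b, Finset.card_biUnion]
  · have hc : ∀ q ∈ pairsF d a b,
        ({q.1} ×ˢ {q.2} ×ˢ (coreF q.1).powerset ×ˢ (coreF q.2).powerset).card
          = 2 ^ (a - 1) * 2 ^ (b - 1) := by
      intro q hq
      simp only [pairsF, Finset.mem_filter, Finset.mem_univ, true_and] at hq
      obtain ⟨hqa, hqb, -, -⟩ := hq
      have hqA : q.1.Nonempty := Finset.card_pos.1 (by omega)
      have hqB : q.2.Nonempty := Finset.card_pos.1 (by omega)
      rw [Finset.card_product, Finset.card_product, Finset.card_product,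
        Finset.card_singleton, Finset.card_singleton, Finset.card_powerset,
        Finset.card_powerset, coreF_card hqA, coreF_card hqB, hqa, hqb]
      ring
    rw [Finset.sum_congr rfl hc, Finset.sum_const, smul_eq_mul]
  · intro q hq q' hq' hne
    simp only [Finset.disjoint_left]
    intro p hp hp'
    simp only [Finset.mem_product, Finset.mem_singleton] at hp hp'
    exact hne (Prod.ext (hp.1.symm.trans hp'.1) (hp.2.1.symm.trans hp'.2.1))

lemma pairsAll_card (d a b : ℕ) :
    (pairsAll d a b).card = d.choose a * (d - a).choose b := by
  classical
  have heq : pairsAll d a b = (Finset.univ.powersetCard a).biUnion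
      (fun A => {A} ×ˢ Aᶜ.powersetCard b) := by
    ext ⟨A, B⟩
    simp only [pairsAll, Finset.mem_filter, Finset.mem_univ, true_and, Finset.mem_biUnion,
      Finset.mem_powersetCard_univ, Finset.mem_product, Finset.mem_singleton,
      Finset.mem_powersetCard]
    constructor
    · rintro ⟨h1, h2, h3⟩
      exact ⟨A, ⟨Finset.subset_univ A, h1⟩, rfl, le_compl_iff_disjoint_left.2 h3, h2⟩
    · rintro ⟨A0, ⟨-, h1⟩, e1, hsub, h2⟩
      subst e1
      exact ⟨h1, h2, le_compl_iff_disjoint_left.1 hsub⟩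
  rw [heq, Finset.card_biUnion]
  · have hc : ∀ A ∈ (Finset.univ : Finset (Fin d)).powersetCard a,
        ({A} ×ˢ Aᶜ.powersetCard b).card = (d - a).choose b := by
      intro A hA
      rw [Finset.mem_powersetCard] at hA
      obtain ⟨-, hA⟩ := hA
      rw [Finset.card_product, Finset.card_singleton, Finset.card_powersetCard, one_mul,
        Finset.card_compl, hA, Fintype.card_fin]
    rw [Finset.sum_congr rfl hc, Finset.sum_const, smul_eq_mul,
      Finset.card_powersetCard, Finset.card_univ, Fintype.card_fin]
  · intro q hq q' hq' hne
    simp only [Finset.disjoint_left]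
    intro p hp hp'
    simp only [Finset.mem_product, Finset.mem_singleton] at hp hp'
    exact hne (hp.1.symm.trans hp'.1)

lemma pairsF_eq_of_lt (d a b : ℕ) (h : a < b) : pairsF d a b = pairsAll d a b := by
  classical
  unfold pairsF pairsAll
  apply Finset.filter_congr
  intro q _
  constructor
  · rintro ⟨c1, c2, c3, -⟩; exact ⟨c1, c2, c3⟩
  · rintro ⟨c1, c2, c3⟩; exact ⟨c1, c2, c3, fun hab => absurd hab (Nat.ne_of_lt h)⟩

lemma pairsF_card_of_eq (d a : ℕ) (ha : 1 ≤ a) :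
    2 * (pairsF d a a).card = (pairsAll d a a).card := by
  classical
  have key : ∀ q ∈ pairsAll d a a, q.1.min ≠ q.2.min := by
    intro q hq
    simp only [pairsAll, Finset.mem_filter, Finset.mem_univ, true_and] at hq
    exact min_ne_of_disjoint (Finset.card_pos.1 (by omega)) (Finset.card_pos.1 (by omega))
      hq.2.2
  have h1 : (pairsAll d a a).filter (fun q => q.1.min < q.2.min) = pairsF d a a := by
    unfold pairsAll pairsF
    rw [Finset.filter_filter]
    apply Finset.filter_congr
    intro q _
    constructor
    · rintro ⟨⟨c1, c2, c3⟩, c4⟩; exact ⟨c1, c2, c3, fun _ => c4⟩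
    · rintro ⟨c1, c2, c3, c4⟩; exact ⟨⟨c1, c2, c3⟩, c4 rfl⟩
  have h2 : ((pairsAll d a a).filter (fun q => q.1.min < q.2.min)).card
        + ((pairsAll d a a).filter (fun q => ¬ q.1.min < q.2.min)).card
        = (pairsAll d a a).card :=
    Finset.card_filter_add_card_filter_not _
  have h3 : (pairsAll d a a).filter (fun q => ¬ q.1.min < q.2.min)
      = (pairsAll d a a).filter (fun q => q.2.min < q.1.min) := by
    apply Finset.filter_congr
    intro q hq
    simp only [not_lt]
    constructor
    · intro hle; exact lt_of_le_of_ne hle (Ne.symm (key q hq))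
    · exact le_of_lt
  have h4 : ((pairsAll d a a).filter (fun q => q.2.min < q.1.min)).card
      = ((pairsAll d a a).filter (fun q => q.1.min < q.2.min)).card := by
    apply Finset.card_bij' (fun q _ => Prod.swap q) (fun q _ => Prod.swap q)
    · intro q hq
      simp only [pairsAll, Finset.mem_filter, Finset.mem_univ, true_and, Prod.fst_swap,
        Prod.snd_swap] at hq ⊢
      exact ⟨⟨hq.1.2.1, hq.1.1, hq.1.2.2.symm⟩, hq.2⟩
    · intro q hq
      simp only [pairsAll, Finset.mem_filter, Finset.mem_univ, true_and, Prod.fst_swap,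
        Prod.snd_swap] at hq ⊢
      exact ⟨⟨hq.1.2.1, hq.1.1, hq.1.2.2.symm⟩, hq.2⟩
    · intro q _; exact Prod.swap_swap q
    · intro q _; exact Prod.swap_swap q
  rw [← h1, ← h2, h3, h4]
  ring

lemma orbit_ncard (d a b : ℕ) (ha : 1 ≤ a) (hb : 1 ≤ b) :
    (orbitSet d a b).ncard = (pairsF d a b).card * (2 ^ (a - 1) * 2 ^ (b - 1)) := by
  rw [orbit_eq ha hb]
  have hset : {p : F4 d | Canon d a b p} = ↑(canonF d a b) := by
    ext p; simp [canonF]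
  rw [hset, Set.ncard_image_of_injOn (hset ▸ phi_injOn ha hb),
    Set.ncard_coe_finset, canonF_card d a b ha hb]

/-- the cardinality of the orbit `O^{(d)}_{a,b}` is
`C(d,a)·C(d−a,b)·2^{a+b−2}` if `a < b`, and half of that if `a = b`. -/
theorem stmt9 (d a b : ℕ) (hd : 0 < d) (ha : 1 ≤ a) (hab : a ≤ b) (habd : a + b ≤ d) :
    (a < b →
      (orbitSet d a b).ncard = d.choose a * (d - a).choose b * 2 ^ (a + b - 2)) ∧
    (a = b →
      2 * (orbitSet d a b).ncard = d.choose a * (d - a).choose b * 2 ^ (a + b - 2)) := by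
  have hb : 1 ≤ b := le_trans ha hab
  have hpow : 2 ^ (a - 1) * 2 ^ (b - 1) = 2 ^ (a + b - 2) := by
    rw [← pow_add]
    congr 1
    omega
  constructor
  · intro hlt
    rw [orbit_ncard d a b ha hb, pairsF_eq_of_lt d a b hlt, pairsAll_card, hpow, mul_assoc]
  · intro hEq
    subst hEq
    calc 2 * (orbitSet d a a).ncard
        = 2 * (pairsF d a a).card * (2 ^ (a - 1) * 2 ^ (a - 1)) := by
          rw [orbit_ncard d a a ha ha]; ring
      _ = (pairsAll d a a).card * (2 ^ (a - 1) * 2 ^ (a - 1)) := by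
          rw [pairsF_card_of_eq d a ha]
      _ = d.choose a * (d - a).choose a * 2 ^ (a + a - 2) := by
          rw [pairsAll_card, hpow, mul_assoc]
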